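/- (Telescoping sum for partitions) Let μ be a fixed partition and g a rational-valued function of partitions. Define A(n) := Σ_{|λ/μ|=n} f_{λ/μ} · g(λ) and B(n) := Σ_{|λ/μ|=n} f_{λ/μ} · Dg(λ), where the sums range over all partitions λ containing μ with |λ| − |μ| = n. Then for every nonnegative integer n, A(n) = A(0) + Σ_{k=0}^{n−1} B(k). -/

import Mathlib

open scoped Classical

namespace HookDiff

/-- The hook length of the box `c` in the Young diagram `μ`: the number of boxes
directly to its right, directly below/above it in its column, plus the box itself. -/
def hook (μ : YoungDiagram) (c : ℕ × ℕ) : ℕ :=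
  (μ.cells.filter (fun d => (d.1 = c.1 ∧ c.2 ≤ d.2) ∨ (d.2 = c.2 ∧ c.1 ≤ d.1))).card

/-- `H μ` is the product of all hook lengths of `μ`. -/
def H (μ : YoungDiagram) : ℚ := ∏ c ∈ μ.cells, (hook μ c : ℚ)

/-- The cells that can be added to `μ` to produce a Young diagram (inner corners). -/
noncomputable def addables (μ : YoungDiagram) : Finset (ℕ × ℕ) :=
  (Finset.range (μ.card + 1) ×ˢ Finset.range (μ.card + 1)).filter
    (fun c => c ∉ μ ∧ IsLowerSet (↑(insert c μ.cells) : Set (ℕ × ℕ)))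

/-- Add a box at cell `c` to `μ` (junk value `μ` if the result is not a diagram). -/
noncomputable def addBox (μ : YoungDiagram) (c : ℕ × ℕ) : YoungDiagram :=
  if h : IsLowerSet (↑(insert c μ.cells) : Set (ℕ × ℕ)) then ⟨insert c μ.cells, h⟩ else μ

/-- The cells that can be removed from `μ` leaving a Young diagram (outer corners). -/
noncomputable def removables (μ : YoungDiagram) : Finset (ℕ × ℕ) :=
  μ.cells.filter (fun c => IsLowerSet (↑(μ.cells.erase c) : Set (ℕ × ℕ)))

/-- Remove the box at cell `c` from `μ` (junk value `μ` if the result is not a diagram). -/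
noncomputable def removeBox (μ : YoungDiagram) (c : ℕ × ℕ) : YoungDiagram :=
  if h : IsLowerSet (↑(μ.cells.erase c) : Set (ℕ × ℕ)) then ⟨μ.cells.erase c, h⟩ else μ

/-- The difference operator `D`: `Dg(λ) = Σ_{λ⁺} g(λ⁺) − g(λ)`, where `λ⁺` runs over
all partitions obtained from `λ` by adding one box. -/
noncomputable def D (g : YoungDiagram → ℚ) : YoungDiagram → ℚ :=
  fun μ => (∑ c ∈ addables μ, g (addBox μ c)) - g μ

/-- The difference operator `D⁻`: `D⁻g(λ) = |λ|·g(λ) − Σ_{λ⁻} g(λ⁻)`, where `λ⁻` runs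
over all partitions obtained from `λ` by removing one box. -/
noncomputable def Dminus (g : YoungDiagram → ℚ) : YoungDiagram → ℚ :=
  fun μ => (μ.card : ℚ) * g μ - ∑ c ∈ removables μ, g (removeBox μ c)

/-- `fskew n μ λ` is the number of standard Young tableaux of skew shape `λ/μ`
(with `n = |λ| - |μ|`), i.e. the number of chains `μ = ν₀ ⊂ ν₁ ⊂ ⋯ ⊂ ν_n = λ`
in which each diagram is obtained from the previous one by adding a single box. -/
noncomputable def fskew : ℕ → YoungDiagram → YoungDiagram → ℕ
  | 0, μ, l => if μ = l then 1 else 0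
  | n + 1, μ, l => ∑ c ∈ addables μ, fskew n (addBox μ c) l

/-- `f_λ`, the number of standard Young tableaux of shape `λ`. -/
noncomputable def f (l : YoungDiagram) : ℕ := fskew l.card ⊥ l

/-- `S(λ, r) = Σ_{□∈λ} ∏_{j=1}^{r} (h_□² − j²)`. -/
def S (l : YoungDiagram) (r : ℕ) : ℚ :=
  ∑ c ∈ l.cells, ∏ j ∈ Finset.Icc 1 r, ((hook l c : ℚ) ^ 2 - (j : ℚ) ^ 2)

/-- `K_r = (2r)!·(2r+1)! / (r!·(r+1)!²)`. -/
def K (r : ℕ) : ℚ :=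
  ((2 * r).factorial : ℚ) * ((2 * r + 1).factorial : ℚ) /
    ((r.factorial : ℚ) * ((r + 1).factorial : ℚ) ^ 2)

/-- The content of the box `c = (i, j)` is `j - i`. -/
def content (c : ℕ × ℕ) : ℚ := (c.2 : ℚ) - (c.1 : ℚ)

/-- `C(λ, r) = Σ_{□∈λ} ∏_{j=0}^{r-1} (c_□² − j²)`. -/
def Ccont (l : YoungDiagram) (r : ℕ) : ℚ :=
  ∑ c ∈ l.cells, ∏ j ∈ Finset.range r, (content c ^ 2 - (j : ℚ) ^ 2)


section Aux

lemma cell_lt_card (l : YoungDiagram) {c : ℕ × ℕ} (hc : c ∈ l) :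
    c.1 < l.card ∧ c.2 < l.card := by
  constructor
  · have h : (Finset.range (c.1 + 1)).image (fun k => (k, c.2)) ⊆ l.cells := by
      intro x hx
      simp only [Finset.mem_image, Finset.mem_range] at hx
      obtain ⟨k, hk, rfl⟩ := hx
      exact l.up_left_mem (Nat.lt_succ_iff.mp hk) le_rfl (by simpa using hc)
    have := Finset.card_le_card h
    rwa [Finset.card_image_of_injective _ (fun a b hab => by simpa using hab),
      Finset.card_range, Nat.succ_le_iff] at this
  · have h : (Finset.range (c.2 + 1)).image (fun k => (c.1, k)) ⊆ l.cells := by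
      intro x hx
      simp only [Finset.mem_image, Finset.mem_range] at hx
      obtain ⟨k, hk, rfl⟩ := hx
      exact l.up_left_mem le_rfl (Nat.lt_succ_iff.mp hk) (by simpa using hc)
    have := Finset.card_le_card h
    rwa [Finset.card_image_of_injective _ (fun a b hab => by simpa using hab),
      Finset.card_range, Nat.succ_le_iff] at this

lemma fin_level (μ : YoungDiagram) (m : ℕ) :
    {l : YoungDiagram | μ ≤ l ∧ l.card = m}.Finite := by
  apply Set.Finite.of_finite_image (f := YoungDiagram.cells)
  · apply Set.Finite.subset (Finset.range m ×ˢ Finset.range m).powerset.finite_toSet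
    rintro s ⟨l, ⟨_, hl⟩, rfl⟩
    simp only [Finset.coe_powerset, Set.mem_preimage, Set.mem_powerset_iff, Finset.coe_subset]
    intro c hc
    obtain ⟨h1, h2⟩ := cell_lt_card l hc
    simp only [Finset.mem_product, Finset.mem_range]
    omega
  · intro a _ b _ hab
    exact YoungDiagram.ext hab

noncomputable def lev (μ : YoungDiagram) (n : ℕ) : Finset YoungDiagram :=
  (fin_level μ (μ.card + n)).toFinset

lemma mem_lev {μ l : YoungDiagram} {n : ℕ} :
    l ∈ lev μ n ↔ μ ≤ l ∧ l.card = μ.card + n := by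
  simp [lev, Set.Finite.mem_toFinset]

lemma finsum_lev (μ : YoungDiagram) (n : ℕ) (F : YoungDiagram → ℚ) :
    (∑ᶠ l ∈ {l : YoungDiagram | μ ≤ l ∧ l.card = μ.card + n}, F l) = ∑ l ∈ lev μ n, F l := by
  rw [← finsum_mem_coe_finset]
  congr 1
  simp [lev, Set.Finite.coe_toFinset]

noncomputable def A (n : ℕ) (μ : YoungDiagram) (g : YoungDiagram → ℚ) : ℚ :=
  ∑ l ∈ lev μ n, (fskew n μ l : ℚ) * g l

lemma addables_spec {μ : YoungDiagram} {c : ℕ × ℕ} (hc : c ∈ addables μ) :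
    c ∉ μ ∧ IsLowerSet (↑(insert c μ.cells) : Set (ℕ × ℕ)) :=
  (Finset.mem_filter.mp hc).2

lemma addBox_cells {μ : YoungDiagram} {c : ℕ × ℕ} (hc : c ∈ addables μ) :
    (addBox μ c).cells = insert c μ.cells := by
  rw [addBox, dif_pos (addables_spec hc).2]

lemma le_addBox {μ : YoungDiagram} {c : ℕ × ℕ} (hc : c ∈ addables μ) : μ ≤ addBox μ c := by
  rw [← YoungDiagram.cells_subset_iff, addBox_cells hc]
  exact Finset.subset_insert _ _

lemma addBox_card {μ : YoungDiagram} {c : ℕ × ℕ} (hc : c ∈ addables μ) :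
    (addBox μ c).card = μ.card + 1 := by
  rw [YoungDiagram.card, addBox_cells hc,
    Finset.card_insert_of_notMem (addables_spec hc).1]

lemma fskew_eq_zero {n : ℕ} {μ l : YoungDiagram}
    (h : ¬(μ ≤ l ∧ l.card = μ.card + n)) : fskew n μ l = 0 := by
  induction n generalizing μ with
  | zero =>
    rw [fskew, if_neg]
    rintro rfl
    exact h ⟨le_rfl, by simp⟩
  | succ n ih =>
    rw [fskew]
    apply Finset.sum_eq_zero
    intro c hc
    apply ih
    rintro ⟨h1, h2⟩
    apply h
    refine ⟨(le_addBox hc).trans h1, ?_⟩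
    rw [addBox_card hc] at h2
    omega

lemma A_zero (μ : YoungDiagram) (g : YoungDiagram → ℚ) : A 0 μ g = g μ := by
  have hlev : lev μ 0 = {μ} := by
    ext l
    simp only [mem_lev, Finset.mem_singleton]
    constructor
    · rintro ⟨h1, h2⟩
      exact (YoungDiagram.ext (Finset.eq_of_subset_of_card_le h1
        (show l.card ≤ μ.card by omega))).symm
    · rintro rfl
      exact ⟨le_rfl, by omega⟩
  simp [A, hlev, fskew]

lemma A_succ (n : ℕ) (μ : YoungDiagram) (g : YoungDiagram → ℚ) :
    A (n + 1) μ g = ∑ c ∈ addables μ, A n (addBox μ c) g := by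
  rw [A]
  simp only [fskew, Nat.cast_sum, Finset.sum_mul]
  rw [Finset.sum_comm]
  apply Finset.sum_congr rfl
  intro c hc
  rw [A]
  refine (Finset.sum_subset ?_ ?_).symm
  · intro l hl
    rw [mem_lev] at hl ⊢
    obtain ⟨h1, h2⟩ := hl
    rw [addBox_card hc] at h2
    exact ⟨(le_addBox hc).trans h1, by omega⟩
  · intro l _ hl
    rw [mem_lev] at hl
    rw [fskew_eq_zero hl]
    simp

lemma A_step (n : ℕ) (μ : YoungDiagram) (g : YoungDiagram → ℚ) :
    A (n + 1) μ g = A n μ (fun l => ∑ c ∈ addables l, g (addBox l c)) := by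
  induction n generalizing μ with
  | zero =>
    rw [A_succ, A_zero]
    simp only [A_zero]
  | succ n ih =>
    rw [A_succ, A_succ]
    exact Finset.sum_congr rfl fun c _ => ih _

lemma A_D (n : ℕ) (μ : YoungDiagram) (g : YoungDiagram → ℚ) :
    A (n + 1) μ g = A n μ g + A n μ (D g) := by
  rw [A_step]
  simp only [A, D, mul_sub, mul_add, Finset.sum_sub_distrib]
  ring


end Aux

/-- **Telescoping sum for partitions.** With `A(n) = Σ_{|λ/μ|=n} f_{λ/μ} g(λ)` and
`B(n) = Σ_{|λ/μ|=n} f_{λ/μ} Dg(λ)`, we have `A(n) = A(0) + Σ_{k=0}^{n−1} B(k)`. -/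
theorem telescoping_sum (μ : YoungDiagram) (g : YoungDiagram → ℚ) (n : ℕ) :
    (∑ᶠ l ∈ {l : YoungDiagram | μ ≤ l ∧ l.card = μ.card + n}, (fskew n μ l : ℚ) * g l)
      = (∑ᶠ l ∈ {l : YoungDiagram | μ ≤ l ∧ l.card = μ.card + 0}, (fskew 0 μ l : ℚ) * g l)
        + ∑ k ∈ Finset.range n,
            ∑ᶠ l ∈ {l : YoungDiagram | μ ≤ l ∧ l.card = μ.card + k},
              (fskew k μ l : ℚ) * D g l := by
  rw [finsum_lev, finsum_lev]
  have hlev : ∀ k, (∑ᶠ l ∈ {l : YoungDiagram | μ ≤ l ∧ l.card = μ.card + k},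
      (fskew k μ l : ℚ) * D g l) = A k μ (D g) := fun k => finsum_lev μ k _
  simp only [hlev]
  show A n μ g = A 0 μ g + ∑ k ∈ Finset.range n, A k μ (D g)
  induction n with
  | zero => simp
  | succ n ih => rw [Finset.sum_range_succ, ← add_assoc, ← ih, A_D]

end HookDiff
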